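/- Let c, m be positive integers, Z a real m×c matrix, and L a real c×c matrix with zero column sums (∀ j, ∑ i, L i j = 0) and nonpositive off-diagonal entries (L i j ≤ 0 for i ≠ j). Suppose x* : Fin m → ℝ is positive and satisfies L *ᵥ (fun i => Real.exp ((Zᵀ *ᵥ (fun k => Real.log (x* k))) i)) = 0. Then for every positive x : Fin m → ℝ, one has Z *ᵥ (L *ᵥ (fun i => Real.exp ((Zᵀ *ᵥ (fun k => Real.log (x k))) i))) = 0 if and only if for all distinct indices i, j with L i j ≠ 0, (Zᵀ *ᵥ (fun k => Real.log (x k) − Real.log (x* k))) i = (Zᵀ *ᵥ (fun k => Real.log (x k) − Real.log (x* k))) j. (The set of positive equilibria is exactly { x > 0 : Sᵀ Ln x = Sᵀ Ln x* }.) -/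
import Mathlib


open Matrix

theorem equilibria_set_of_complex_balanced_network
    (c m : ℕ) (hc : 0 < c) (hm : 0 < m)
    (Z : Matrix (Fin m) (Fin c) ℝ)
    (L : Matrix (Fin c) (Fin c) ℝ)
    (hcol : ∀ j, ∑ i, L i j = 0)
    (hoff : ∀ i j, i ≠ j → L i j ≤ 0)
    (xs : Fin m → ℝ) (hxs : ∀ k, 0 < xs k)
    (hbal : L *ᵥ (fun i => Real.exp ((Zᵀ *ᵥ (fun k => Real.log (xs k))) i)) = 0) :
    ∀ x : Fin m → ℝ, (∀ k, 0 < x k) →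
      (Z *ᵥ (L *ᵥ (fun i => Real.exp ((Zᵀ *ᵥ (fun k => Real.log (x k))) i))) = 0 ↔
        ∀ i j, i ≠ j → L i j ≠ 0 →
          (Zᵀ *ᵥ (fun k => Real.log (x k) - Real.log (xs k))) i =
            (Zᵀ *ᵥ (fun k => Real.log (x k) - Real.log (xs k))) j) := by
  intro x hx
  set v : Fin m → ℝ := fun k => Real.log (x k) - Real.log (xs k) with hv
  set u : Fin c → ℝ := fun i => (Zᵀ *ᵥ v) i with hu
  set K : Fin c → ℝ := fun i => Real.exp ((Zᵀ *ᵥ (fun k => Real.log (xs k))) i) with hKdef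
  have hK : ∀ i, 0 < K i := fun i => Real.exp_pos _
  -- the "current" exponential vector in terms of K and u
  have hw : (fun i => Real.exp ((Zᵀ *ᵥ (fun k => Real.log (x k))) i))
      = fun i => K i * Real.exp (u i) := by
    funext i
    have hsplit : (Zᵀ *ᵥ (fun k => Real.log (x k))) i
        = (Zᵀ *ᵥ (fun k => Real.log (xs k))) i + u i := by
      simp only [hu, hv, Matrix.mulVec, dotProduct, mul_sub]
      rw [Finset.sum_sub_distrib]
      ring
    rw [hsplit, Real.exp_add, hKdef]
  -- complex balance as sums
  have hbalK : ∀ i, ∑ j, L i j * K j = 0 := by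
    intro i
    have := congrFun hbal i
    simpa [Matrix.mulVec, dotProduct] using this
  constructor
  · intro h i0 j0 hne hL
    rw [hw] at h
    -- dot product with v gives zero
    have hS1 : ∑ i, u i * (∑ j, L i j * (K j * Real.exp (u j))) = 0 := by
      have h0 : v ⬝ᵥ (Z *ᵥ (L *ᵥ fun i => K i * Real.exp (u i))) = 0 := by
        rw [h]; simp
      rw [Matrix.dotProduct_mulVec, ← Matrix.mulVec_transpose] at h0
      simpa [dotProduct, Matrix.mulVec, hu] using h0
    -- the key nonnegative double sum
    set f : Fin c → Fin c → ℝ := fun i j =>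
      (-L i j) * K j * (Real.exp (u j) * (u j - u i) - (Real.exp (u j) - Real.exp (u i)))
      with hf
    have hbr_nn : ∀ i j : Fin c,
        0 ≤ Real.exp (u j) * (u j - u i) - (Real.exp (u j) - Real.exp (u i)) := by
      intro i j
      have h1 := Real.add_one_le_exp (u i - u j)
      have hei : Real.exp (u i) = Real.exp (u j) * Real.exp (u i - u j) := by
        rw [← Real.exp_add]; ring_nf
      nlinarith [Real.exp_pos (u j)]
    have hfnn : ∀ i j, 0 ≤ f i j := by
      intro i j
      by_cases hij : i = j
      · simp [hf, hij]
      · have h1 : 0 ≤ -L i j := by linarith [hoff i j hij]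
        exact mul_nonneg (mul_nonneg h1 (hK j).le) (hbr_nn i j)
    have hT : ∑ i, ∑ j, f i j = 0 := by
      have key : ∑ i, ∑ j, f i j
          = ∑ i, ∑ j, (u i * (L i j * (K j * Real.exp (u j)))
              - K j * Real.exp (u j) * u j * L i j
              + K j * Real.exp (u j) * L i j
              - Real.exp (u i) * (L i j * K j)) :=
        Finset.sum_congr rfl fun i _ => Finset.sum_congr rfl fun j _ => by
          simp only [hf]; ring
      have hA : ∑ i : Fin c, ∑ j : Fin c, u i * (L i j * (K j * Real.exp (u j))) = 0 := by
        simpa [Finset.mul_sum] using hS1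
      have hB : ∑ i : Fin c, ∑ j : Fin c, K j * Real.exp (u j) * u j * L i j = 0 := by
        rw [Finset.sum_comm]
        simp only [← Finset.mul_sum]
        simp [hcol]
      have hC : ∑ i : Fin c, ∑ j : Fin c, K j * Real.exp (u j) * L i j = 0 := by
        rw [Finset.sum_comm]
        simp only [← Finset.mul_sum]
        simp [hcol]
      have hD : ∑ i : Fin c, ∑ j : Fin c, Real.exp (u i) * (L i j * K j) = 0 := by
        simp only [← Finset.mul_sum]
        simp [hbalK]
      rw [key]
      simp only [Finset.sum_sub_distrib, Finset.sum_add_distrib]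
      rw [hA, hB, hC, hD]
      ring
    -- each term vanishes
    have hzero : f i0 j0 = 0 := by
      have houter : ∀ i ∈ Finset.univ, (0:ℝ) ≤ ∑ j, f i j :=
        fun i _ => Finset.sum_nonneg fun j _ => hfnn i j
      have h1 := (Finset.sum_eq_zero_iff_of_nonneg houter).mp hT i0 (Finset.mem_univ _)
      have hinner : ∀ j ∈ Finset.univ, (0:ℝ) ≤ f i0 j := fun j _ => hfnn i0 j
      exact (Finset.sum_eq_zero_iff_of_nonneg hinner).mp h1 j0 (Finset.mem_univ _)
    -- conclude u i0 = u j0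
    have hLpos : 0 < -L i0 j0 := by
      rcases lt_or_eq_of_le (hoff i0 j0 hne) with h' | h'
      · linarith
      · exact absurd h' hL
    have hbr : Real.exp (u j0) * (u j0 - u i0) - (Real.exp (u j0) - Real.exp (u i0)) = 0 := by
      by_contra hne'
      have h2 : 0 < Real.exp (u j0) * (u j0 - u i0) - (Real.exp (u j0) - Real.exp (u i0)) :=
        lt_of_le_of_ne (hbr_nn i0 j0) (Ne.symm hne')
      have hpos : 0 < f i0 j0 := mul_pos (mul_pos hLpos (hK j0)) h2
      linarith [hzero, hpos]
    have htzero : u i0 - u j0 = 0 := by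
      by_contra ht
      have hlt := Real.add_one_lt_exp ht
      have hei : Real.exp (u i0) = Real.exp (u j0) * Real.exp (u i0 - u j0) := by
        rw [← Real.exp_add]; ring_nf
      nlinarith [Real.exp_pos (u j0)]
    have : u i0 = u j0 := by linarith
    exact this
  · intro hpair
    rw [hw]
    have hLw : (L *ᵥ fun i => K i * Real.exp (u i)) = 0 := by
      funext i
      have hterm : ∀ j, L i j * (K j * Real.exp (u j)) = Real.exp (u i) * (L i j * K j) := by
        intro j
        by_cases hij : i = j
        · subst hij; ring
        · by_cases hL : L i j = 0
          · simp [hL]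
          · have huij : u i = u j := hpair i j hij hL
            rw [huij]; ring
      have hsum : ∑ j, L i j * (K j * Real.exp (u j)) = 0 := by
        rw [Finset.sum_congr rfl (fun j _ => hterm j), ← Finset.mul_sum, hbalK i, mul_zero]
      simpa [Matrix.mulVec, dotProduct] using hsum
    rw [hLw, Matrix.mulVec_zero]
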